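/- Let A and B be positive definite matrices (or operators) with the weighted geometric mean A♯_t B = A^{1/2}(A^{-1/2} B A^{-1/2})^t A^{1/2} and the weighted spectral geometric mean A♮_t B = (A^{-1}♯ B)^t A (A^{-1}♯ B)^t, for 0 ≤ t ≤ 1, where ♯ = ♯_{1/2}. Then X = A♮_t B is the unique positive definite solution of the equation A^{-1} ♯ X = (A^{-1} ♯ B)^t. -/

import Mathlib

open Matrix

variable {n : Type*} [Fintype n] [DecidableEq n]

/-- Real power of a matrix, defined via the spectral decomposition for Hermitian matrices. -/
noncomputable def mpow (A : Matrix n n ℝ) (t : ℝ) : Matrix n n ℝ :=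
  if hA : A.IsHermitian then
    (hA.eigenvectorUnitary : Matrix n n ℝ) * Matrix.diagonal (fun i => hA.eigenvalues i ^ t) *
      star (hA.eigenvectorUnitary : Matrix n n ℝ)
  else A

/-- The weighted geometric mean `A ♯ₜ B = A^{1/2} (A^{-1/2} B A^{-1/2})^t A^{1/2}`. -/
noncomputable def gmean (t : ℝ) (A B : Matrix n n ℝ) : Matrix n n ℝ :=
  mpow A (1/2) * mpow (mpow A (-(1/2)) * B * mpow A (-(1/2))) t * mpow A (1/2)

/-- The weighted spectral geometric mean `A ♮ₜ B = (A⁻¹ ♯ B)^t A (A⁻¹ ♯ B)^t`. -/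
noncomputable def smean (t : ℝ) (A B : Matrix n n ℝ) : Matrix n n ℝ :=
  mpow (gmean (1/2) A⁻¹ B) t * A * mpow (gmean (1/2) A⁻¹ B) t

set_option linter.unusedSectionVars false in
lemma mpow_eq {A : Matrix n n ℝ} (hA : A.IsHermitian) (t : ℝ) :
    mpow A t = (hA.eigenvectorUnitary : Matrix n n ℝ) *
      Matrix.diagonal (fun i => hA.eigenvalues i ^ t) *
      star (hA.eigenvectorUnitary : Matrix n n ℝ) := by
  rw [mpow, dif_pos hA]

lemma mpow_isHermitian {A : Matrix n n ℝ} (hA : A.IsHermitian) (t : ℝ) :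
    (mpow A t).IsHermitian := by
  rw [mpow_eq hA]
  exact isHermitian_mul_mul_conjTranspose _ (isHermitian_diagonal _)

lemma mpow_mul_mpow {A : Matrix n n ℝ} (hA : A.PosDef) (s t : ℝ) :
    mpow A s * mpow A t = mpow A (s + t) := by
  have hU : star (hA.isHermitian.eigenvectorUnitary : Matrix n n ℝ) *
      (hA.isHermitian.eigenvectorUnitary : Matrix n n ℝ) = 1 :=
    mem_unitaryGroup_iff'.mp (hA.isHermitian.eigenvectorUnitary).2
  rw [mpow_eq hA.isHermitian s, mpow_eq hA.isHermitian t, mpow_eq hA.isHermitian (s + t)]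
  simp only [mul_assoc]
  rw [← mul_assoc (star _) _ _, hU, one_mul, ← mul_assoc (diagonal _), diagonal_mul_diagonal]
  have hd : (fun i => hA.isHermitian.eigenvalues i ^ s * hA.isHermitian.eigenvalues i ^ t)
      = fun i => hA.isHermitian.eigenvalues i ^ (s + t) :=
    funext fun i => (Real.rpow_add (hA.eigenvalues_pos i) s t).symm
  rw [hd]

lemma mpow_zero {A : Matrix n n ℝ} (hA : A.IsHermitian) : mpow A 0 = 1 := by
  rw [mpow_eq hA]
  simp [Real.rpow_zero, mem_unitaryGroup_iff.mp (hA.eigenvectorUnitary).2]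

lemma mpow_one {A : Matrix n n ℝ} (hA : A.IsHermitian) : mpow A 1 = A := by
  rw [mpow_eq hA]
  conv_rhs => rw [hA.spectral_theorem]
  congr 2
  funext i
  simp [Real.rpow_one]

lemma mulVec_injective_of_isUnit {B : Matrix n n ℝ} (hB : IsUnit B) :
    Function.Injective B.mulVec := fun x y h => by
  have h2 := congrArg (B⁻¹.mulVec) h
  rwa [mulVec_mulVec, mulVec_mulVec, nonsing_inv_mul B ((isUnit_iff_isUnit_det B).mp hB),
    one_mulVec, one_mulVec] at h2

set_option linter.unusedSectionVars false in
lemma posDef_conj {M : Matrix n n ℝ} (hM : M.PosDef) (B : Matrix n n ℝ)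
    (hB : Function.Injective (Bᴴ).mulVec) : (B * M * Bᴴ).PosDef := by
  refine posDef_iff_dotProduct_mulVec.mpr ⟨isHermitian_mul_mul_conjTranspose _ hM.1, fun x hx => ?_⟩
  have hx' : Bᴴ *ᵥ x ≠ 0 := fun h => hx (hB (by simpa using h))
  have h2 := hM.dotProduct_mulVec_pos hx'
  simpa only [star_mulVec, conjTranspose_conjTranspose, dotProduct_mulVec,
    vecMul_vecMul] using h2

lemma posDef_conj_pd {M B : Matrix n n ℝ} (hM : M.PosDef) (hB : B.PosDef) :
    (B * M * B).PosDef := by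
  have hinj : Function.Injective (Bᴴ).mulVec := by
    rw [hB.1]; exact _root_.mulVec_injective_of_isUnit hB.isUnit
  have h := posDef_conj hM B hinj
  rwa [hB.1] at h

lemma mpow_posDef {A : Matrix n n ℝ} (hA : A.PosDef) (t : ℝ) : (mpow A t).PosDef := by
  rw [mpow_eq hA.isHermitian]
  have hD : (Matrix.diagonal (fun i => hA.isHermitian.eigenvalues i ^ t)).PosDef :=
    posDef_diagonal_iff.mpr fun i => Real.rpow_pos_of_pos (hA.eigenvalues_pos i) t
  have hUunit : IsUnit (star (hA.isHermitian.eigenvectorUnitary : Matrix n n ℝ)) :=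
    ⟨⟨_, _, mem_unitaryGroup_iff'.mp (hA.isHermitian.eigenvectorUnitary).2,
      mem_unitaryGroup_iff.mp (hA.isHermitian.eigenvectorUnitary).2⟩, rfl⟩
  exact posDef_conj hD (hA.isHermitian.eigenvectorUnitary : Matrix n n ℝ)
    (_root_.mulVec_injective_of_isUnit hUunit)

open scoped MatrixOrder in
/-- The square root (as `mpow _ (1/2)`) of the square of a positive definite matrix. -/
lemma mpow_half_sq {G : Matrix n n ℝ} (hG : G.PosDef) : mpow (G * G) (1/2) = G := by
  have hGG : (G * G).PosDef := by
    have h := posDef_conj_pd Matrix.PosDef.one hG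
    rwa [mul_one] at h
  refine (CFC.mul_self_eq_mul_self_iff _ _ (mpow_posDef hGG _).posSemidef.nonneg hG.posSemidef.nonneg).mp ?_
  rw [mpow_mul_mpow hGG]
  norm_num
  exact mpow_one hGG.isHermitian

lemma mpow_half_mul_self {A : Matrix n n ℝ} (hA : A.PosDef) :
    mpow A (1/2) * mpow A (1/2) = A := by
  rw [mpow_mul_mpow hA]; norm_num; exact mpow_one hA.isHermitian

lemma mpow_half_mul_neg_half {A : Matrix n n ℝ} (hA : A.PosDef) :
    mpow A (1/2) * mpow A (-(1/2)) = 1 := by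
  rw [mpow_mul_mpow hA]
  norm_num
  exact mpow_zero hA.isHermitian

lemma mpow_neg_half_mul_half {A : Matrix n n ℝ} (hA : A.PosDef) :
    mpow A (-(1/2)) * mpow A (1/2) = 1 := by
  rw [mpow_mul_mpow hA]
  norm_num
  exact mpow_zero hA.isHermitian

lemma mpow_inv_neg_half_sq {A : Matrix n n ℝ} (hA : A.PosDef) :
    mpow A⁻¹ (-(1/2)) * mpow A⁻¹ (-(1/2)) = A := by
  have hAi : A⁻¹.PosDef := hA.inv
  rw [mpow_mul_mpow hAi]
  have h1 : (-(1/2 : ℝ)) + (-(1/2)) = -1 := by norm_num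
  rw [h1]
  have h2 : mpow A⁻¹ (-1) * A⁻¹ = 1 := by
    nth_rewrite 2 [← mpow_one hAi.isHermitian]
    rw [mpow_mul_mpow hAi]
    norm_num
    exact mpow_zero hAi.isHermitian
  have h3 := Matrix.inv_eq_left_inv h2
  rw [← h3, Matrix.nonsing_inv_nonsing_inv A (isUnit_iff_ne_zero.mpr hA.det_pos.ne')]

/-- Key computation: `(A⁻¹ ♯ X) A (A⁻¹ ♯ X) = X`, and `A⁻¹ ♯ X` is positive definite. -/
lemma gmean_half_inv {A X : Matrix n n ℝ} (hA : A.PosDef) (hX : X.PosDef) :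
    (gmean (1/2) A⁻¹ X).PosDef ∧
      gmean (1/2) A⁻¹ X * A * gmean (1/2) A⁻¹ X = X := by
  have hAi : A⁻¹.PosDef := hA.inv
  set P := mpow A⁻¹ (1/2) with hPdef
  set Q := mpow A⁻¹ (-(1/2)) with hQdef
  have hP : P.PosDef := mpow_posDef hAi _
  have hQ : Q.PosDef := mpow_posDef hAi _
  have hPQ : P * Q = 1 := mpow_half_mul_neg_half hAi
  have hQP : Q * P = 1 := mpow_neg_half_mul_half hAi
  have hQQ : Q * Q = A := mpow_inv_neg_half_sq hA
  have hQXQ : (Q * X * Q).PosDef := posDef_conj_pd hX hQ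
  have hS : (mpow (Q * X * Q) (1/2)).PosDef := mpow_posDef hQXQ _
  have hSS : mpow (Q * X * Q) (1/2) * mpow (Q * X * Q) (1/2) = Q * X * Q :=
    mpow_half_mul_self hQXQ
  constructor
  · exact posDef_conj_pd hS hP
  · show P * mpow (Q * X * Q) (1/2) * P * A * (P * mpow (Q * X * Q) (1/2) * P) = X
    rw [← hQQ]
    calc P * mpow (Q * X * Q) (1/2) * P * (Q * Q) * (P * mpow (Q * X * Q) (1/2) * P)
        = P * mpow (Q * X * Q) (1/2) * (P * Q) * ((Q * P) * mpow (Q * X * Q) (1/2) * P) := by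
          noncomm_ring
      _ = P * (mpow (Q * X * Q) (1/2) * mpow (Q * X * Q) (1/2)) * P := by
          rw [hPQ, hQP]; noncomm_ring
      _ = (P * Q) * X * (Q * P) := by rw [hSS]; noncomm_ring
      _ = X := by rw [hPQ, hQP, one_mul, mul_one]

/-- Key computation: `A⁻¹ ♯ (G A G) = G` for positive definite `G`. -/
lemma gmean_half_inv_conj {A G : Matrix n n ℝ} (hA : A.PosDef) (hG : G.PosDef) :
    gmean (1/2) A⁻¹ (G * A * G) = G := by
  have hAi : A⁻¹.PosDef := hA.inv
  set P := mpow A⁻¹ (1/2) with hPdef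
  set Q := mpow A⁻¹ (-(1/2)) with hQdef
  have hP : P.PosDef := mpow_posDef hAi _
  have hQ : Q.PosDef := mpow_posDef hAi _
  have hPQ : P * Q = 1 := mpow_half_mul_neg_half hAi
  have hQP : Q * P = 1 := mpow_neg_half_mul_half hAi
  have hQQ : Q * Q = A := mpow_inv_neg_half_sq hA
  have hQGQ : (Q * G * Q).PosDef := posDef_conj_pd hG hQ
  show P * mpow (Q * (G * A * G) * Q) (1/2) * P = G
  have key : Q * (G * A * G) * Q = (Q * G * Q) * (Q * G * Q) := by
    rw [← hQQ]; noncomm_ring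
  rw [key, mpow_half_sq hQGQ]
  calc P * (Q * G * Q) * P = (P * Q) * G * (Q * P) := by noncomm_ring
    _ = G := by rw [hPQ, hQP, one_mul, mul_one]

theorem smean_unique_solution (t : ℝ) (ht0 : 0 ≤ t) (ht1 : t ≤ 1)
    (A B : Matrix n n ℝ) (hA : A.PosDef) (hB : B.PosDef) :
    ((smean t A B).PosDef ∧
      gmean (1/2) A⁻¹ (smean t A B) = mpow (gmean (1/2) A⁻¹ B) t) ∧
    ∀ X : Matrix n n ℝ, X.PosDef →
      gmean (1/2) A⁻¹ X = mpow (gmean (1/2) A⁻¹ B) t → X = smean t A B := by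
  have hM : (gmean (1/2) A⁻¹ B).PosDef := (gmean_half_inv hA hB).1
  have hT : (mpow (gmean (1/2) A⁻¹ B) t).PosDef := mpow_posDef hM t
  have hsmean : smean t A B =
      mpow (gmean (1/2) A⁻¹ B) t * A * mpow (gmean (1/2) A⁻¹ B) t := rfl
  refine ⟨⟨?_, ?_⟩, ?_⟩
  · rw [hsmean]; exact posDef_conj_pd hA hT
  · rw [hsmean]; exact gmean_half_inv_conj hA hT
  · intro X hX hXeq
    have h2 := (gmean_half_inv hA hX).2
    rw [hXeq] at h2
    rw [hsmean, ← h2]
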